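/- (Representer theorem.) Let H be a real Hilbert space, m ∈ ℕ, w₁,…,w_m ∈ H, let e : (Fin m → ℝ) → ℝ ∪ {+∞} be any function (taking values in EReal, never −∞), and let r : ℝ → ℝ be monotone nondecreasing. Define F : H → ℝ ∪ {+∞} by F(w) := e(fun i => ⟪w_i, w⟫) + r(‖w‖). If there exists w* ∈ H with F(w*) ≤ F(w) for all w ∈ H, then there exists ŵ in the linear span of {w₁,…,w_m} with F(ŵ) ≤ F(w) for all w ∈ H. -/

import Mathlib

open scoped RealInnerProductSpace

/-- Representer theorem: Let `H` be a real Hilbert space, `w₁,…,w_m ∈ H`,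
`e : (Fin m → ℝ) → EReal` never `−∞`, and `r : ℝ → ℝ` monotone nondecreasing. If
`F w = e (fun i => ⟪w i, w⟫) + r ‖w‖` attains its minimum over `H`, then it attains its
minimum at some point of the span of `{w₁,…,w_m}`. -/
theorem representer_theorem
    {H : Type*} [NormedAddCommGroup H] [InnerProductSpace ℝ H] [CompleteSpace H]
    (m : ℕ) (w : Fin m → H)
    (e : (Fin m → ℝ) → EReal) (he : ∀ v : Fin m → ℝ, e v ≠ ⊥)
    (r : ℝ → ℝ) (hr : Monotone r)
    (F : H → EReal)
    (hF : ∀ x : H, F x = e (fun i => ⟪w i, x⟫) + ((r ‖x‖ : ℝ) : EReal))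
    (hmin : ∃ wstar : H, ∀ x : H, F wstar ≤ F x) :
    ∃ what ∈ Submodule.span ℝ (Set.range w), ∀ x : H, F what ≤ F x := by
  obtain ⟨ws, hws⟩ := hmin
  set K : Submodule ℝ H := Submodule.span ℝ (Set.range w)
  haveI : FiniteDimensional ℝ K := FiniteDimensional.span_of_finite ℝ (Set.finite_range w)
  set p : H := (K.orthogonalProjectionOnto ws : H)
  have hpK : p ∈ K := (K.orthogonalProjectionOnto ws).2
  refine ⟨p, hpK, fun x => ?_⟩
  have horth : ws - p ∈ Kᗮ := K.sub_starProjection_mem_orthogonal ws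
  have hinner : ∀ i, ⟪w i, p⟫ = ⟪w i, ws⟫ := by
    intro i
    have hwi : w i ∈ K := Submodule.subset_span ⟨i, rfl⟩
    have := horth (w i) hwi
    rw [inner_sub_right] at this
    have h0 := this
    linarith
  have hnorm : ‖p‖ ≤ ‖ws‖ := by
    calc ‖p‖ ≤ ‖K.orthogonalProjectionOnto‖ * ‖ws‖ := (K.orthogonalProjectionOnto).le_opNorm ws
      _ ≤ 1 * ‖ws‖ := by
          gcongr; exact Submodule.orthogonalProjectionOnto_norm_le K
      _ = ‖ws‖ := one_mul _
  have key : F p ≤ F ws := by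
    rw [hF p, hF ws]
    have : (fun i => ⟪w i, p⟫) = fun i => ⟪w i, ws⟫ := funext hinner
    rw [this]
    exact add_le_add_right (EReal.coe_le_coe_iff.mpr (hr hnorm)) _
  exact key.trans (hws x)
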